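/- arXiv:2410.10066 — 2 statements merged into one kernel-verified Lean document; each statement's English description precedes it below -/
import Mathlib

section
/- For all real numbers 0 < r < s with s - r ∈ (0,1), sup_{y ∈ ℝ} |(1/√r)φ(y/√r) - (1/√s)φ(y/√s)| ≤ (1/√r - 1/√s) + (1/√s)(√(s-r) + 1 - exp(-√(s-r)/r)), where φ is the standard normal density. -/
noncomputable def stdNormal (x : ℝ) : ℝ :=
  (1 / Real.sqrt (2 * Real.pi)) * Real.exp (-x ^ 2 / 2)

theorem stmt_2 (r s : ℝ) (hr : 0 < r) (hrs : r < s) (h1 : s - r < 1) (y : ℝ) :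
    |(1 / Real.sqrt r) * stdNormal (y / Real.sqrt r)
      - (1 / Real.sqrt s) * stdNormal (y / Real.sqrt s)|
      ≤ (1 / Real.sqrt r - 1 / Real.sqrt s)
        + (1 / Real.sqrt s) *
          (Real.sqrt (s - r) + 1 - Real.exp (-Real.sqrt (s - r) / r)) := by
  have hs : 0 < s := hr.trans hrs
  have hδ : 0 < s - r := sub_pos.mpr hrs
  have hA0 : 0 < Real.sqrt (s - r) := Real.sqrt_pos.mpr hδ
  set A := Real.sqrt (s - r) with hAdef
  have hA2 : A * A = s - r := Real.mul_self_sqrt hδ.le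
  have hsrp : 0 < Real.sqrt r := Real.sqrt_pos.mpr hr
  have hssp : 0 < Real.sqrt s := Real.sqrt_pos.mpr hs
  have hrs' : 1 / Real.sqrt s ≤ 1 / Real.sqrt r :=
    one_div_le_one_div_of_le hsrp (Real.sqrt_le_sqrt hrs.le)
  have hc0 : 0 < 1 / Real.sqrt (2 * Real.pi) := by positivity
  have hc1 : 1 / Real.sqrt (2 * Real.pi) ≤ 1 := by
    rw [div_le_one (Real.sqrt_pos.mpr (by positivity))]
    have h6 : (1:ℝ) ≤ 2 * Real.pi := by nlinarith [Real.pi_gt_three]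
    nlinarith [Real.sq_sqrt (by positivity : (0:ℝ) ≤ 2 * Real.pi),
      Real.sqrt_nonneg (2 * Real.pi)]
  -- simplify the squares
  have hyr : (y / Real.sqrt r) ^ 2 / 2 = y ^ 2 / (2 * r) := by
    rw [div_pow, Real.sq_sqrt hr.le, div_div, mul_comm]
  have hys : (y / Real.sqrt s) ^ 2 / 2 = y ^ 2 / (2 * s) := by
    rw [div_pow, Real.sq_sqrt hs.le, div_div, mul_comm]
  set c := 1 / Real.sqrt (2 * Real.pi) with hcdef
  set E1 := Real.exp (-(y ^ 2 / (2 * r))) with hE1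
  set E2 := Real.exp (-(y ^ 2 / (2 * s))) with hE2
  have hE1pos : 0 < E1 := Real.exp_pos _
  have hE2pos : 0 < E2 := Real.exp_pos _
  have hE1le : E1 ≤ 1 := Real.exp_le_one_iff.mpr (neg_nonpos.mpr (by positivity))
  have hE2le : E2 ≤ 1 := Real.exp_le_one_iff.mpr (neg_nonpos.mpr (by positivity))
  have hE12 : E1 ≤ E2 := by
    apply Real.exp_le_exp.mpr
    have : y ^ 2 / (2 * s) ≤ y ^ 2 / (2 * r) := by
      apply div_le_div_of_nonneg_left (by positivity) (by positivity) (by linarith)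
    linarith
  have hexpAr : Real.exp (-A / r) ≤ 1 := Real.exp_le_one_iff.mpr (by
    apply div_nonpos_of_nonpos_of_nonneg <;> linarith)
  -- key bound on the exponential difference
  have key : E2 - E1 ≤ A + 1 - Real.exp (-A / r) := by
    rcases le_or_gt (y ^ 2 * (s - r) / (2 * r * s)) (A / r) with hcase | hcase
    · -- small y case
      have hfac : E1 = E2 * Real.exp (-(y ^ 2 * (s - r) / (2 * r * s))) := by
        rw [hE1, hE2, ← Real.exp_add]
        congr 1
        field_simp
        ring
      have hmono : Real.exp (-A / r) ≤ Real.exp (-(y ^ 2 * (s - r) / (2 * r * s))) := by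
        apply Real.exp_le_exp.mpr
        rw [neg_div]
        linarith
      have hx1 : Real.exp (-(y ^ 2 * (s - r) / (2 * r * s))) ≤ 1 :=
        Real.exp_le_one_iff.mpr (neg_nonpos.mpr (by positivity))
      nlinarith [hE2pos, hE2le, hmono, hx1]
    · -- large y case : E2 ≤ A
      have hv : A / (s - r) ≤ y ^ 2 / (2 * s) := by
        rw [div_le_div_iff₀ hδ (by positivity)]
        have hcase' : A * (2 * r * s) < y ^ 2 * (s - r) * r :=
          (div_lt_div_iff₀ hr (by positivity)).mp hcase
        nlinarith
      have hAinv : A / (s - r) = 1 / A := by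
        rw [eq_div_iff (ne_of_gt hA0), div_mul_eq_mul_div, hA2, div_self (ne_of_gt hδ)]
      have hE2A : E2 ≤ A := by
        have h1A : E2 ≤ Real.exp (-(1 / A)) := by
          apply Real.exp_le_exp.mpr
          rw [hAinv] at hv; linarith
        have h2A : Real.exp (-(1 / A)) ≤ A := by
          rw [Real.exp_neg]
          rw [inv_le_comm₀ (Real.exp_pos _) hA0]
          have := Real.add_one_le_exp (1 / A)
          have h1A0 : 0 < 1 / A := by positivity
          calc A⁻¹ = 1 / A := (one_div A).symm
            _ ≤ 1 / A + 1 := by linarith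
            _ ≤ Real.exp (1 / A) := this
        exact h1A.trans h2A
      linarith
  -- assemble
  have hsplit : (1 / Real.sqrt r) * (c * E1) - (1 / Real.sqrt s) * (c * E2)
      = (1 / Real.sqrt r - 1 / Real.sqrt s) * (c * E1)
        + (1 / Real.sqrt s) * (c * (E1 - E2)) := by ring
  have habs : |(1 / Real.sqrt r) * (c * E1) - (1 / Real.sqrt s) * (c * E2)|
      ≤ (1 / Real.sqrt r - 1 / Real.sqrt s) * (c * E1)
        + (1 / Real.sqrt s) * (c * (E2 - E1)) := by
    rw [hsplit]
    calc |(1 / Real.sqrt r - 1 / Real.sqrt s) * (c * E1)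
          + (1 / Real.sqrt s) * (c * (E1 - E2))|
        ≤ |(1 / Real.sqrt r - 1 / Real.sqrt s) * (c * E1)|
          + |(1 / Real.sqrt s) * (c * (E1 - E2))| := abs_add_le _ _
      _ = (1 / Real.sqrt r - 1 / Real.sqrt s) * (c * E1)
          + (1 / Real.sqrt s) * (c * (E2 - E1)) := by
          rw [abs_of_nonneg (mul_nonneg (by linarith) (by positivity)),
            abs_of_nonpos (mul_nonpos_of_nonneg_of_nonpos (by positivity)
              (mul_nonpos_of_nonneg_of_nonpos hc0.le (by linarith)))]
          ring
  have hgoal : (1 / Real.sqrt r) * stdNormal (y / Real.sqrt r)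
      - (1 / Real.sqrt s) * stdNormal (y / Real.sqrt s)
      = (1 / Real.sqrt r) * (c * E1) - (1 / Real.sqrt s) * (c * E2) := by
    simp only [stdNormal, hcdef, hE1, hE2, neg_div]
    rw [hyr, hys]
  rw [hgoal]
  refine habs.trans (add_le_add ?_ ?_)
  · have h01 : c * E1 ≤ 1 := mul_le_one₀ hc1 hE1pos.le hE1le
    calc (1 / Real.sqrt r - 1 / Real.sqrt s) * (c * E1)
        ≤ (1 / Real.sqrt r - 1 / Real.sqrt s) * 1 :=
          mul_le_mul_of_nonneg_left h01 (by linarith)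
      _ = 1 / Real.sqrt r - 1 / Real.sqrt s := mul_one _
  · have h2 : c * (E2 - E1) ≤ A + 1 - Real.exp (-A / r) :=
      (mul_le_of_le_one_left (by linarith) hc1).trans key
    exact mul_le_mul_of_nonneg_left h2 (by positivity)
end

section
/- For r ∈ (0, T] and q ∈ (0,1), ∫_0^r (1/√s - 1/√(s+q) + (1/√(s+q))(√q + 1 - e^{-√q/s})) ds ≤ C(T) q^{1/8} for a constant C(T) depending only on T. -/
open MeasureTheory

private lemma aux_one_sub_exp_le (y : ℝ) (hy : 0 ≤ y) :
    1 - Real.exp (-y) ≤ y ^ ((1 : ℝ)/4) := by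
  rcases eq_or_lt_of_le hy with h | h
  · simp [← h, Real.zero_rpow (by norm_num : ((1:ℝ)/4) ≠ 0)]
  rcases le_or_gt y 1 with h1 | h1
  · have h2 : 1 - Real.exp (-y) ≤ y := by linarith [Real.add_one_le_exp (-y)]
    refine h2.trans ?_
    calc y = y ^ (1 : ℝ) := (Real.rpow_one y).symm
    _ ≤ y ^ ((1:ℝ)/4) := Real.rpow_le_rpow_of_exponent_ge h h1 (by norm_num)
  · have h2 : (1:ℝ) ≤ y ^ ((1:ℝ)/4) := Real.one_le_rpow h1.le (by norm_num)
    have h3 : 0 < Real.exp (-y) := Real.exp_pos _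
    linarith

set_option maxHeartbeats 1000000 in
theorem stmt_13 (T : ℝ) (hT : 0 < T) :
    ∃ C : ℝ, 0 < C ∧ ∀ r ∈ Set.Ioc (0 : ℝ) T, ∀ q ∈ Set.Ioo (0 : ℝ) 1,
      (∫ s in (0 : ℝ)..r,
          (1 / Real.sqrt s - 1 / Real.sqrt (s + q)
            + (1 / Real.sqrt (s + q))
              * (Real.sqrt q + 1 - Real.exp (-Real.sqrt q / s))))
        ≤ C * q ^ ((1 : ℝ) / 8) := by
  refine ⟨2 + 2 * Real.sqrt (T + 1) + 4 * T ^ ((1:ℝ)/4) + 1, by positivity, ?_⟩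
  rintro r ⟨hr0, hrT⟩ q ⟨hq0, hq1⟩
  set g : ℝ → ℝ := fun s =>
    1 / Real.sqrt s - 1 / Real.sqrt (s + q)
      + (1 / Real.sqrt (s + q)) * (Real.sqrt q + 1 - Real.exp (-Real.sqrt q / s)) with hg
  set F : ℝ → ℝ := fun s =>
    s ^ (-(1:ℝ)/2) - (s+q) ^ (-(1:ℝ)/2) + Real.sqrt q * (s+q) ^ (-(1:ℝ)/2)
      + q ^ ((1:ℝ)/8) * s ^ (-(3:ℝ)/4) with hF
  have hsqq : 0 < Real.sqrt q := Real.sqrt_pos.mpr hq0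
  -- integrability facts
  have hInt1 : IntervalIntegrable (fun s : ℝ => s ^ (-(1:ℝ)/2)) volume 0 r :=
    intervalIntegral.intervalIntegrable_rpow' (by norm_num)
  have hInt3 : IntervalIntegrable (fun s : ℝ => s ^ (-(3:ℝ)/4)) volume 0 r :=
    intervalIntegral.intervalIntegrable_rpow' (by norm_num)
  have hInt2 : IntervalIntegrable (fun s : ℝ => (s+q) ^ (-(1:ℝ)/2)) volume 0 r := by
    apply ContinuousOn.intervalIntegrable
    apply ContinuousOn.rpow_const (by fun_prop)
    intro x hx
    rw [Set.uIcc_of_le hr0.le] at hx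
    exact Or.inl (by nlinarith [hx.1])
  have hIntF : IntervalIntegrable F volume 0 r := by
    exact ((hInt1.sub hInt2).add (hInt2.const_mul _)).add (hInt3.const_mul _)
  have hIntg : IntervalIntegrable g volume 0 r := by
    apply (hInt1.const_mul 3).mono_fun
    · apply Measurable.aestronglyMeasurable
      apply Measurable.add
      · exact (measurable_const.div Real.continuous_sqrt.measurable).sub
          (measurable_const.div ((Real.continuous_sqrt.measurable).comp (measurable_id.add_const q)))
      · exact (measurable_const.div ((Real.continuous_sqrt.measurable).comp
          (measurable_id.add_const q))).mul
          (measurable_const.sub ((measurable_const.div measurable_id).exp))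
    · rw [Filter.EventuallyLE, ae_restrict_iff' measurableSet_uIoc]
      filter_upwards with s hs
      rw [Set.uIoc_of_le hr0.le] at hs
      obtain ⟨hs0, hsr⟩ := hs
      have hsq : 0 < s + q := by linarith
      have h1 : 0 < Real.sqrt s := Real.sqrt_pos.mpr hs0
      have h2 : 0 < Real.sqrt (s+q) := Real.sqrt_pos.mpr hsq
      have h3 : 1 / Real.sqrt (s+q) ≤ 1 / Real.sqrt s :=
        one_div_le_one_div_of_le h1 (Real.sqrt_le_sqrt (by linarith))
      have hexp0 : Real.exp (-Real.sqrt q / s) ≤ 1 := by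
        rw [Real.exp_le_one_iff, div_nonpos_iff]
        right
        constructor <;> [linarith; linarith]
      have hexp1 : 0 < Real.exp (-Real.sqrt q / s) := Real.exp_pos _
      have hsq1 : Real.sqrt q ≤ 1 := by
        rw [show (1:ℝ) = Real.sqrt 1 by simp]
        exact Real.sqrt_le_sqrt hq1.le
      have hgnn : 0 ≤ g s := by
        have t1 : 0 ≤ 1 / Real.sqrt s - 1 / Real.sqrt (s+q) := by linarith
        have t2 : 0 ≤ (1 / Real.sqrt (s+q)) * (Real.sqrt q + 1 - Real.exp (-Real.sqrt q / s)) := by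
          apply mul_nonneg (by positivity); linarith
        simp only [hg]; linarith
      have hgle : g s ≤ 3 * s ^ (-(1:ℝ)/2) := by
        have hpow : s ^ (-(1:ℝ)/2) = 1 / Real.sqrt s := by
          rw [Real.sqrt_eq_rpow, one_div, ← Real.rpow_neg hs0.le]; norm_num
        rw [hpow]
        have t2 : (1 / Real.sqrt (s+q)) * (Real.sqrt q + 1 - Real.exp (-Real.sqrt q / s))
            ≤ (1 / Real.sqrt s) * 2 := by
          apply mul_le_mul h3 (by linarith) (by linarith) (by positivity)
        simp only [hg]
        have : 0 < 1 / Real.sqrt (s+q) := by positivity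
        linarith
      rw [Real.norm_eq_abs, Real.norm_eq_abs, abs_of_nonneg hgnn, abs_of_nonneg (by positivity)]
      exact hgle
  -- pointwise bound g ≤ F on [0, r]
  have hle : ∀ x ∈ Set.Icc (0:ℝ) r, g x ≤ F x := by
    intro x hx
    rcases eq_or_lt_of_le hx.1 with h0 | h0
    · -- x = 0
      simp only [hg, hF, ← h0]
      rw [Real.sqrt_zero, Real.zero_rpow (by norm_num : (-(1:ℝ)/2) ≠ 0),
        Real.zero_rpow (by norm_num : (-(3:ℝ)/4) ≠ 0)]
      have : (0:ℝ) + q = q := zero_add q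
      rw [this]
      have hq12 : q ^ (-(1:ℝ)/2) = 1 / Real.sqrt q := by
        rw [Real.sqrt_eq_rpow, one_div, ← Real.rpow_neg hq0.le]; norm_num
      rw [hq12]
      have : -Real.sqrt q / 0 = 0 := div_zero _
      rw [this, Real.exp_zero]
      field_simp
      simp
    · -- 0 < x
      have hxq : 0 < x + q := by linarith
      have hpx : x ^ (-(1:ℝ)/2) = 1 / Real.sqrt x := by
        rw [Real.sqrt_eq_rpow, one_div, ← Real.rpow_neg h0.le]; norm_num
      have hpxq : (x+q) ^ (-(1:ℝ)/2) = 1 / Real.sqrt (x+q) := by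
        rw [Real.sqrt_eq_rpow, one_div, ← Real.rpow_neg hxq.le]; norm_num
      have key : (1 / Real.sqrt (x+q)) * (1 - Real.exp (-Real.sqrt q / x))
          ≤ q ^ ((1:ℝ)/8) * x ^ (-(3:ℝ)/4) := by
        have hy : 0 ≤ Real.sqrt q / x := by positivity
        have h14 : 1 - Real.exp (-(Real.sqrt q / x)) ≤ (Real.sqrt q / x) ^ ((1:ℝ)/4) :=
          aux_one_sub_exp_le _ hy
        have hrw : (Real.sqrt q / x) ^ ((1:ℝ)/4) = q ^ ((1:ℝ)/8) * x ^ (-((1:ℝ)/4)) := by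
          rw [Real.div_rpow (Real.sqrt_nonneg q) h0.le, Real.sqrt_eq_rpow,
            ← Real.rpow_mul hq0.le, div_eq_mul_inv _ (x ^ ((1:ℝ)/4)),
            ← Real.rpow_neg h0.le]
          norm_num
        have hb : 1 / Real.sqrt (x+q) ≤ x ^ (-(1:ℝ)/2) := by
          rw [hpx]
          exact one_div_le_one_div_of_le (Real.sqrt_pos.mpr h0)
            (Real.sqrt_le_sqrt (by linarith))
        have hexp0' : Real.exp (-Real.sqrt q / x) ≤ 1 := by
          rw [Real.exp_le_one_iff, div_nonpos_iff]
          right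
          constructor <;> [linarith; linarith]
        have hxx : x ^ (-(1:ℝ)/2) * x ^ (-((1:ℝ)/4)) = x ^ (-(3:ℝ)/4) := by
          rw [← Real.rpow_add h0]; norm_num
        calc (1 / Real.sqrt (x+q)) * (1 - Real.exp (-Real.sqrt q / x))
            ≤ x ^ (-(1:ℝ)/2) * ((Real.sqrt q / x) ^ ((1:ℝ)/4)) := by
              apply mul_le_mul hb ?_ ?_ (by positivity)
              · rw [neg_div]; exact h14
              · linarith
          _ = q ^ ((1:ℝ)/8) * x ^ (-(3:ℝ)/4) := by
              rw [hrw, ← mul_assoc, mul_comm (x ^ (-(1:ℝ)/2)), mul_assoc, hxx]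
      have hexp0 : Real.exp (-Real.sqrt q / x) ≤ 1 := by
        rw [Real.exp_le_one_iff, div_nonpos_iff]
        right
        constructor <;> [linarith; linarith]
      simp only [hg, hF, hpx, hpxq]
      have expand : (1 / Real.sqrt (x+q)) * (Real.sqrt q + 1 - Real.exp (-Real.sqrt q / x))
          = Real.sqrt q * (1 / Real.sqrt (x+q))
            + (1 / Real.sqrt (x+q)) * (1 - Real.exp (-Real.sqrt q / x)) := by ring
      rw [expand]
      linarith [key]
  have mono := intervalIntegral.integral_mono_on hr0.le hIntg hIntF hle
  refine mono.trans ?_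
  -- compute the integral of F
  have hA : (∫ s in (0:ℝ)..r, s ^ (-(1:ℝ)/2)) = 2 * r ^ ((1:ℝ)/2) := by
    rw [integral_rpow (Or.inl (by norm_num))]
    rw [Real.zero_rpow (by norm_num)]
    norm_num
    ring
  have hB : (∫ s in (0:ℝ)..r, (s+q) ^ (-(1:ℝ)/2))
      = 2 * (r+q) ^ ((1:ℝ)/2) - 2 * q ^ ((1:ℝ)/2) := by
    rw [intervalIntegral.integral_comp_add_right (fun s => s ^ (-(1:ℝ)/2)) q,
      integral_rpow (Or.inl (by norm_num))]
    rw [zero_add]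
    norm_num
    ring
  have hC : (∫ s in (0:ℝ)..r, s ^ (-(3:ℝ)/4)) = 4 * r ^ ((1:ℝ)/4) := by
    rw [integral_rpow (Or.inl (by norm_num))]
    rw [Real.zero_rpow (by norm_num)]
    norm_num
    ring
  have hsplit : (∫ s in (0:ℝ)..r, F s)
      = (∫ s in (0:ℝ)..r, s ^ (-(1:ℝ)/2)) - (∫ s in (0:ℝ)..r, (s+q) ^ (-(1:ℝ)/2))
        + Real.sqrt q * (∫ s in (0:ℝ)..r, (s+q) ^ (-(1:ℝ)/2))
        + q ^ ((1:ℝ)/8) * (∫ s in (0:ℝ)..r, s ^ (-(3:ℝ)/4)) := by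
    rw [hF]
    rw [intervalIntegral.integral_add ((hInt1.sub hInt2).add (hInt2.const_mul _))
      (hInt3.const_mul _),
      intervalIntegral.integral_add (hInt1.sub hInt2) (hInt2.const_mul _),
      intervalIntegral.integral_sub hInt1 hInt2,
      intervalIntegral.integral_const_mul, intervalIntegral.integral_const_mul]
  rw [hsplit, hA, hB, hC]
  -- now bound everything
  have e1 : r ^ ((1:ℝ)/2) ≤ (r+q) ^ ((1:ℝ)/2) :=
    Real.rpow_le_rpow hr0.le (by linarith) (by norm_num)
  have e2 : q ^ ((1:ℝ)/2) ≤ q ^ ((1:ℝ)/8) :=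
    Real.rpow_le_rpow_of_exponent_ge hq0 hq1.le (by norm_num)
  have e3 : (r+q) ^ ((1:ℝ)/2) ≤ Real.sqrt (T+1) := by
    rw [Real.sqrt_eq_rpow]
    exact Real.rpow_le_rpow (by linarith) (by linarith) (by norm_num)
  have e4 : r ^ ((1:ℝ)/4) ≤ T ^ ((1:ℝ)/4) :=
    Real.rpow_le_rpow hr0.le hrT (by norm_num)
  have hq18 : 0 < q ^ ((1:ℝ)/8) := Real.rpow_pos_of_pos hq0 _
  have hsq : Real.sqrt q = q ^ ((1:ℝ)/2) := Real.sqrt_eq_rpow q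
  have hsqle : Real.sqrt q ≤ q ^ ((1:ℝ)/8) := by rw [hsq]; exact e2
  have e5 : q ^ ((1:ℝ)/2) * (2 * (r+q) ^ ((1:ℝ)/2)) ≤ q ^ ((1:ℝ)/8) * (2 * Real.sqrt (T+1)) := by
    apply mul_le_mul e2 (by linarith) (by positivity) (by positivity)
  have e6 : 0 ≤ q ^ ((1:ℝ)/2) * (2 * q ^ ((1:ℝ)/2)) := by positivity
  have e7 : q ^ ((1:ℝ)/8) * (4 * r ^ ((1:ℝ)/4)) ≤ q ^ ((1:ℝ)/8) * (4 * T ^ ((1:ℝ)/4)) := by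
    apply mul_le_mul_of_nonneg_left (by linarith) hq18.le
  rw [hsq]
  nlinarith [hq18, e1, e2, e5, e6, e7]
end
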